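/- arXiv:2110.09079 — 2 statements merged into one kernel-verified Lean document; each statement's English description precedes it below -/
import Mathlib

section
/- The function F(s) = ∫₀^π cos θ / (2(1−cos θ) + s)^{1/2} dθ, defined for s > 0, is strictly convex: its second derivative F''(s) = ∫₀^π (3/4) cos θ / (2(1−cos θ) + s)^{5/2} dθ is strictly positive for every s > 0. -/
open Real MeasureTheory intervalIntegral

/-- The function F(s) = ∫₀^π cos θ (2(1−cos θ)+s)^{−1/2} dθ. -/
noncomputable def Fell (s : ℝ) : ℝ :=
  ∫ θ in (0:ℝ)..Real.pi, Real.cos θ * (2*(1 - Real.cos θ) + s) ^ (-(1:ℝ)/2)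

/-- derivative helper -/
lemma hasDerivAt_shift_rpow (c p s : ℝ) (h : c + s ≠ 0) :
    HasDerivAt (fun u : ℝ => (c + u) ^ p) (p * (c + s) ^ (p - 1)) s := by
  have h1 : HasDerivAt (fun u : ℝ => c + u) 1 s := by
    simpa using (hasDerivAt_id s).const_add c
  have h2 := (Real.hasDerivAt_rpow_const (x := c + s) (p := p) (Or.inl h)).comp s h1
  rw [mul_one] at h2
  exact h2

/-- pointwise strict convexity -/
lemma lemA (a b : ℝ) (ha : 0 ≤ a) (hab : a < b) :
    StrictConvexOn ℝ (Set.Ioi (0:ℝ))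
      (fun s : ℝ => (a + s) ^ (-(1:ℝ)/2) - (b + s) ^ (-(1:ℝ)/2)) := by
  have hb : 0 ≤ b := ha.trans hab.le
  apply strictConvexOn_of_deriv2_pos (convex_Ioi 0)
  · apply ContinuousOn.sub
    · apply ContinuousOn.rpow_const (by fun_prop)
      intro x hx
      have hx' : (0:ℝ) < x := hx
      exact Or.inl (by positivity)
    · apply ContinuousOn.rpow_const (by fun_prop)
      intro x hx
      have hx' : (0:ℝ) < x := hx
      exact Or.inl (by positivity)
  · intro s hs
    rw [interior_Ioi] at hs
    have hs : (0:ℝ) < s := hs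
    have has : (0:ℝ) < a + s := by positivity
    have hbs : (0:ℝ) < b + s := by positivity
    set g1 : ℝ → ℝ := fun u =>
      (-(1:ℝ)/2) * (a + u) ^ (-(1:ℝ)/2 - 1) - (-(1:ℝ)/2) * (b + u) ^ (-(1:ℝ)/2 - 1)
    have hd1 : ∀ u ∈ Set.Ioi (0:ℝ),
        HasDerivAt (fun v : ℝ => (a + v) ^ (-(1:ℝ)/2) - (b + v) ^ (-(1:ℝ)/2)) (g1 u) u := by
      intro u hu
      have hu : (0:ℝ) < u := hu
      exact (hasDerivAt_shift_rpow a (-(1:ℝ)/2) u (by positivity)).sub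
        (hasDerivAt_shift_rpow b (-(1:ℝ)/2) u (by positivity))
    have hev : deriv (fun v : ℝ => (a + v) ^ (-(1:ℝ)/2) - (b + v) ^ (-(1:ℝ)/2)) =ᶠ[nhds s] g1 := by
      filter_upwards [Ioi_mem_nhds hs] with u hu
      exact (hd1 u hu).deriv
    have key : deriv^[2] (fun v : ℝ => (a + v) ^ (-(1:ℝ)/2) - (b + v) ^ (-(1:ℝ)/2)) s
        = deriv g1 s := by
      show deriv (deriv _) s = _
      exact hev.deriv_eq
    rw [key]
    have hd2 : HasDerivAt g1
        ((-(1:ℝ)/2) * ((-(1:ℝ)/2 - 1) * (a + s) ^ (-(1:ℝ)/2 - 1 - 1))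
          - (-(1:ℝ)/2) * ((-(1:ℝ)/2 - 1) * (b + s) ^ (-(1:ℝ)/2 - 1 - 1))) s := by
      exact ((hasDerivAt_shift_rpow a (-(1:ℝ)/2 - 1) s (by positivity)).const_mul _).sub
        ((hasDerivAt_shift_rpow b (-(1:ℝ)/2 - 1) s (by positivity)).const_mul _)
    rw [hd2.deriv]
    have hlt : (b + s) ^ (-(1:ℝ)/2 - 1 - 1) < (a + s) ^ (-(1:ℝ)/2 - 1 - 1) :=
      Real.rpow_lt_rpow_of_neg has (by linarith) (by norm_num)
    nlinarith [hlt]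

lemma base_pos {s : ℝ} (hs : 0 < s) (c : ℝ) (hc : c ≤ 1) : 0 < 2*(1 - c) + s := by nlinarith

/-- reflection -/
lemma reflect (f : ℝ → ℝ) (hf : Continuous f) :
    (∫ θ in (0:ℝ)..Real.pi, f θ)
      = ∫ θ in (0:ℝ)..Real.pi/2, (f θ + f (Real.pi - θ)) := by
  have hf2 : IntervalIntegrable (fun θ => f (Real.pi - θ)) volume 0 (Real.pi/2) :=
    (hf.comp (continuous_const.sub continuous_id)).intervalIntegrable _ _
  have h1 : (∫ θ in (0:ℝ)..Real.pi/2, f θ) + (∫ θ in (Real.pi/2)..Real.pi, f θ)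
      = ∫ θ in (0:ℝ)..Real.pi, f θ :=
    integral_add_adjacent_intervals (hf.intervalIntegrable _ _) (hf.intervalIntegrable _ _)
  have h2 : (∫ θ in (0:ℝ)..Real.pi/2, f (Real.pi - θ))
      = ∫ θ in (Real.pi/2)..Real.pi, f θ := by
    have h := intervalIntegral.integral_comp_sub_left (a := (0:ℝ)) (b := Real.pi/2) f Real.pi
    have h3 : Real.pi - Real.pi/2 = Real.pi/2 := by ring
    rw [h, h3, sub_zero]
  rw [intervalIntegral.integral_add (hf.intervalIntegrable _ _) hf2, h2, h1]

lemma cont_integrand {s : ℝ} (hs : 0 < s) (p : ℝ) :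
    Continuous fun θ : ℝ => Real.cos θ * (2*(1 - Real.cos θ) + s) ^ p := by
  apply Real.continuous_cos.mul
  apply Continuous.rpow_const (by fun_prop)
  intro x
  exact Or.inl (base_pos hs _ (Real.cos_le_one x)).ne'

/-- Fell in reflected form -/
lemma Fell_eq {s : ℝ} (hs : 0 < s) :
    Fell s = ∫ θ in (0:ℝ)..Real.pi/2,
      Real.cos θ * ((2*(1 - Real.cos θ) + s) ^ (-(1:ℝ)/2)
        - (2*(1 + Real.cos θ) + s) ^ (-(1:ℝ)/2)) := by
  rw [Fell, reflect _ (cont_integrand hs _)]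
  congr 1
  funext θ
  rw [Real.cos_pi_sub]
  ring_nf

lemma cont_integrand2 {s : ℝ} (hs : 0 < s) (p : ℝ) :
    Continuous fun θ : ℝ =>
      Real.cos θ * ((2*(1 - Real.cos θ) + s) ^ p - (2*(1 + Real.cos θ) + s) ^ p) := by
  apply Real.continuous_cos.mul
  apply Continuous.sub
  · apply Continuous.rpow_const (by fun_prop)
    intro x
    exact Or.inl (base_pos hs _ (Real.cos_le_one x)).ne'
  · apply Continuous.rpow_const (by fun_prop)
    intro x
    have := Real.neg_one_le_cos x
    exact Or.inl (by nlinarith)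

/-- F is strictly convex on (0,∞), and its second derivative, given by
∫₀^π (3/4) cos θ (2(1−cos θ)+s)^{−5/2} dθ, is strictly positive for every s > 0. -/
theorem stmt2 :
    StrictConvexOn ℝ (Set.Ioi (0:ℝ)) Fell ∧
    ∀ s : ℝ, 0 < s →
      0 < ∫ θ in (0:ℝ)..Real.pi,
            (3/4) * Real.cos θ * (2*(1 - Real.cos θ) + s) ^ (-(5:ℝ)/2) := by
  constructor
  · refine ⟨convex_Ioi 0, ?_⟩
    intro x hx y hy hxy a b ha hb hab
    have hx : (0:ℝ) < x := hx
    have hy : (0:ℝ) < y := hy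
    have hz : (0:ℝ) < a * x + b * y := by positivity
    simp only [smul_eq_mul]
    rw [Fell_eq hx, Fell_eq hy, Fell_eq hz]
    rw [← sub_pos]
    have hix := (cont_integrand2 hx (-(1:ℝ)/2)).intervalIntegrable (0:ℝ) (Real.pi/2) (μ := volume)
    have hiy := (cont_integrand2 hy (-(1:ℝ)/2)).intervalIntegrable (0:ℝ) (Real.pi/2) (μ := volume)
    have hiz := (cont_integrand2 hz (-(1:ℝ)/2)).intervalIntegrable (0:ℝ) (Real.pi/2) (μ := volume)
    rw [← intervalIntegral.integral_const_mul a, ← intervalIntegral.integral_const_mul b,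
      ← intervalIntegral.integral_add (hix.const_mul a) (hiy.const_mul b),
      ← intervalIntegral.integral_sub (((hix.const_mul a).add (hiy.const_mul b))) hiz]
    apply intervalIntegral.intervalIntegral_pos_of_pos_on
    · exact (((hix.const_mul a).add (hiy.const_mul b)).sub hiz)
    · intro θ hθ
      obtain ⟨hθ0, hθ1⟩ := hθ
      have hcpos : 0 < Real.cos θ := Real.cos_pos_of_mem_Ioo ⟨by linarith [Real.pi_pos], hθ1⟩
      have hA : (0:ℝ) ≤ 2*(1 - Real.cos θ) := by nlinarith [Real.cos_le_one θ]
      have hAB : 2*(1 - Real.cos θ) < 2*(1 + Real.cos θ) := by nlinarith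
      have hgc := (lemA _ _ hA hAB).2 hx hy hxy ha hb hab
      simp only [smul_eq_mul] at hgc
      nlinarith [mul_pos hcpos (sub_pos.mpr hgc)]
    · linarith [Real.pi_pos]
  · intro s hs
    have hc : Continuous fun θ : ℝ =>
        (3/4) * Real.cos θ * (2*(1 - Real.cos θ) + s) ^ (-(5:ℝ)/2) := by
      have h0 := cont_integrand hs (-(5:ℝ)/2)
      have he : (fun θ : ℝ => (3/4) * Real.cos θ * (2*(1 - Real.cos θ) + s) ^ (-(5:ℝ)/2))
          = fun θ : ℝ => (3/4) * (Real.cos θ * (2*(1 - Real.cos θ) + s) ^ (-(5:ℝ)/2)) := by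
        funext θ; ring
      rw [he]
      exact continuous_const.mul h0
    rw [reflect _ hc]
    apply intervalIntegral.intervalIntegral_pos_of_pos_on
    · exact (hc.add (hc.comp (continuous_const.sub continuous_id))).intervalIntegrable _ _
    · intro θ hθ
      obtain ⟨hθ0, hθ1⟩ := hθ
      have hcpos : 0 < Real.cos θ := Real.cos_pos_of_mem_Ioo ⟨by linarith [Real.pi_pos], hθ1⟩
      have hA : (0:ℝ) < 2*(1 - Real.cos θ) + s := by nlinarith [Real.cos_le_one θ]
      have hB : 2*(1 - Real.cos θ) + s < 2*(1 - Real.cos (Real.pi - θ)) + s := by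
        rw [Real.cos_pi_sub]; nlinarith
      have hlt : (2*(1 - Real.cos (Real.pi - θ)) + s) ^ (-(5:ℝ)/2)
          < (2*(1 - Real.cos θ) + s) ^ (-(5:ℝ)/2) :=
        Real.rpow_lt_rpow_of_neg hA hB (by norm_num)
      rw [Real.cos_pi_sub] at hlt ⊢
      nlinarith [mul_pos hcpos (sub_pos.mpr hlt)]
    · linarith [Real.pi_pos]
end

section
/- For every s > 0, the quantity ∫₀^π (3/4) cos θ / (2(1−cos θ) + s)^{5/2} dθ is strictly positive. Equivalently, after pairing θ with π−θ, the integrand combination (3/4) cos θ [ (2(1−cos θ)+s)^{−5/2} − (2(1+cos θ)+s)^{−5/2} ] is nonnegative on (0, π/2) and positive on a set of positive measure. -/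
open Real MeasureTheory

/-- For every s > 0, ∫₀^π (3/4) cos θ (2(1−cos θ)+s)^{−5/2} dθ > 0; moreover the
symmetrized integrand (3/4) cos θ [(2(1−cos θ)+s)^{−5/2} − (2(1+cos θ)+s)^{−5/2}]
is nonnegative on (0, π/2) and positive on a set of positive measure. -/
theorem stmt3 (s : ℝ) (hs : 0 < s) :
    (0 < ∫ θ in (0:ℝ)..Real.pi,
        (3/4) * Real.cos θ * (2*(1 - Real.cos θ) + s) ^ (-(5:ℝ)/2))
    ∧ (∀ θ ∈ Set.Ioo (0:ℝ) (Real.pi/2),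
        0 ≤ (3/4) * Real.cos θ *
          ((2*(1 - Real.cos θ) + s) ^ (-(5:ℝ)/2)
            - (2*(1 + Real.cos θ) + s) ^ (-(5:ℝ)/2)))
    ∧ 0 < volume {θ : ℝ | θ ∈ Set.Ioo (0:ℝ) (Real.pi/2) ∧
        0 < (3/4) * Real.cos θ *
          ((2*(1 - Real.cos θ) + s) ^ (-(5:ℝ)/2)
            - (2*(1 + Real.cos θ) + s) ^ (-(5:ℝ)/2))} := by
  have hpi := Real.pi_pos
  have hpos1 : ∀ θ : ℝ, 0 < 2*(1 - Real.cos θ) + s := fun θ => by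
    nlinarith [Real.cos_le_one θ]
  set f : ℝ → ℝ := fun θ =>
    (3/4) * Real.cos θ * (2*(1 - Real.cos θ) + s) ^ (-(5:ℝ)/2) with hf
  have hcont : Continuous f := by
    apply Continuous.mul
    · exact continuous_const.mul Real.continuous_cos
    · apply Continuous.rpow_const
      · exact (continuous_const.mul (continuous_const.sub Real.continuous_cos)).add
          continuous_const
      · intro x; exact Or.inl (ne_of_gt (hpos1 x))
  -- strict positivity of symmetrized integrand on (0, π/2)
  have hg : ∀ θ ∈ Set.Ioo (0:ℝ) (Real.pi/2),
      0 < (3/4) * Real.cos θ *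
        ((2*(1 - Real.cos θ) + s) ^ (-(5:ℝ)/2)
          - (2*(1 + Real.cos θ) + s) ^ (-(5:ℝ)/2)) := by
    rintro θ ⟨h1, h2⟩
    have hcos : 0 < Real.cos θ :=
      Real.cos_pos_of_mem_Ioo ⟨by linarith, h2⟩
    have hlt : (2*(1 + Real.cos θ) + s) ^ (-(5:ℝ)/2)
        < (2*(1 - Real.cos θ) + s) ^ (-(5:ℝ)/2) :=
      Real.rpow_lt_rpow_of_neg (hpos1 θ) (by linarith) (by norm_num)
    have : 0 < (3/4 : ℝ) * Real.cos θ := by linarith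
    nlinarith
  refine ⟨?_, fun θ hθ => le_of_lt (hg θ hθ), ?_⟩
  · -- the main integral positivity
    have hfg : ∀ θ : ℝ, f θ + f (Real.pi - θ) =
        (3/4) * Real.cos θ *
          ((2*(1 - Real.cos θ) + s) ^ (-(5:ℝ)/2)
            - (2*(1 + Real.cos θ) + s) ^ (-(5:ℝ)/2)) := by
      intro θ
      simp only [hf, Real.cos_pi_sub]
      ring_nf
    have hcont2 : Continuous fun θ => f (Real.pi - θ) :=
      hcont.comp (continuous_const.sub continuous_id)
    have hsub : (∫ θ in (0:ℝ)..(Real.pi/2), f (Real.pi - θ))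
        = ∫ θ in (Real.pi/2)..Real.pi, f θ := by
      rw [intervalIntegral.integral_comp_sub_left f Real.pi]
      congr 1 <;> ring
    have hsplit : (∫ θ in (0:ℝ)..Real.pi, f θ)
        = (∫ θ in (0:ℝ)..(Real.pi/2), f θ) + ∫ θ in (Real.pi/2)..Real.pi, f θ :=
      (intervalIntegral.integral_add_adjacent_intervals
        (hcont.intervalIntegrable _ _) (hcont.intervalIntegrable _ _)).symm
    have hadd : (∫ θ in (0:ℝ)..(Real.pi/2), (f θ + f (Real.pi - θ)))
        = (∫ θ in (0:ℝ)..(Real.pi/2), f θ)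
          + ∫ θ in (0:ℝ)..(Real.pi/2), f (Real.pi - θ) :=
      intervalIntegral.integral_add (hcont.intervalIntegrable _ _)
        (hcont2.intervalIntegrable _ _)
    have hposint : 0 < ∫ θ in (0:ℝ)..(Real.pi/2), (f θ + f (Real.pi - θ)) := by
      apply intervalIntegral.intervalIntegral_pos_of_pos_on
        ((hcont.add hcont2).intervalIntegrable _ _)
      · intro x hx
        show 0 < f x + f (Real.pi - x)
        rw [hfg]
        exact hg x hx
      · linarith
    calc (0:ℝ) < ∫ θ in (0:ℝ)..(Real.pi/2), (f θ + f (Real.pi - θ)) := hposint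
      _ = (∫ θ in (0:ℝ)..(Real.pi/2), f θ) + ∫ θ in (Real.pi/2)..Real.pi, f θ := by
          rw [hadd, hsub]
      _ = ∫ θ in (0:ℝ)..Real.pi, f θ := hsplit.symm
  · -- positive measure set
    have hset : {θ : ℝ | θ ∈ Set.Ioo (0:ℝ) (Real.pi/2) ∧
        0 < (3/4) * Real.cos θ *
          ((2*(1 - Real.cos θ) + s) ^ (-(5:ℝ)/2)
            - (2*(1 + Real.cos θ) + s) ^ (-(5:ℝ)/2))}
        = Set.Ioo (0:ℝ) (Real.pi/2) := by
      ext θ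
      simp only [Set.mem_setOf_eq]
      exact ⟨fun h => h.1, fun h => ⟨h, hg θ h⟩⟩
    rw [hset, Real.volume_Ioo]
    rw [ENNReal.ofReal_pos]
    linarith
end
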